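/- A topologically finitely generated profinite group has only finitely many open subgroups of index at most N, for every natural number N. -/

import Mathlib

/-- A topologically finitely generated profinite group has only finitely many open
subgroups of index at most `N`, for every natural number `N`. -/
theorem stmt_4 (G : Type*) [Group G] [TopologicalSpace G] [IsTopologicalGroup G]
    [CompactSpace G] [T2Space G] [TotallyDisconnectedSpace G]
    (hfg : ∃ S : Finset G, Dense (Subgroup.closure (S : Set G) : Set G)) (N : ℕ) :
    {H : Subgroup G | IsOpen (H : Set G) ∧ H.index ≤ N}.Finite := by
  classical
  obtain ⟨S, hS⟩ := hfg
  set D : Subgroup G := Subgroup.closure (S : Set G) with hD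
  set T : Set (Subgroup G) := {H : Subgroup G | IsOpen (H : Set G) ∧ H.index ≤ N} with hT
  -- every member of `T` has finite quotient of cardinality at most `N`
  have hfin : ∀ H : T, Finite (G ⧸ (H : Subgroup G)) :=
    fun H => Subgroup.quotient_finite_of_isOpen _ H.2.1
  have hemb : ∀ H : T, ∃ e : G ⧸ (H : Subgroup G) → Fin N, Function.Injective e := by
    intro H
    have : Finite (G ⧸ (H : Subgroup G)) := hfin H
    have hcard : Nat.card (G ⧸ (H : Subgroup G)) ≤ N := by
      rw [← Subgroup.index_eq_card]; exact H.2.2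
    exact ⟨(Fin.castLE hcard) ∘ (Finite.equivFin _), by
      intro a b hab
      exact (Finite.equivFin _).injective (Fin.castLE_injective hcard (by exact hab))⟩
  choose e he using hemb
  -- retraction of the chosen embeddings
  have hne : ∀ H : T, Nonempty (G ⧸ (H : Subgroup G)) := fun H => ⟨QuotientGroup.mk 1⟩
  let r : ∀ H : T, Fin N → G ⧸ (H : Subgroup G) :=
    fun H => @Function.invFun _ _ (hne H) (e H)
  have hre : ∀ H : T, ∀ x, r H (e H x) = x :=
    fun H x => @Function.leftInverse_invFun _ _ (hne H) _ (he H) x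
  -- the encoding map
  let Φ : T → ((S → (Fin N → Fin N) × (Fin N → Fin N)) × Fin N) :=
    fun H => (fun s : S =>
        (e H ∘ (fun x => (s : G) • x) ∘ r H, e H ∘ (fun x => (s : G)⁻¹ • x) ∘ r H),
      e H (QuotientGroup.mk 1))
  have hΦ : Function.Injective Φ := by
    intro H₁ H₂ hEq
    have h1 := congrArg Prod.fst hEq
    have hb : e H₁ (QuotientGroup.mk 1) = e H₂ (QuotientGroup.mk 1) :=
      congrArg Prod.snd hEq
    -- key induction over the dense subgroup
    have main : ∀ g ∈ D, ∀ (x₁ : G ⧸ (H₁ : Subgroup G)) (x₂ : G ⧸ (H₂ : Subgroup G)),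
        (e H₁ x₁ = e H₂ x₂ ↔ e H₁ (g • x₁) = e H₂ (g • x₂)) := by
      intro g hg
      induction hg using Subgroup.closure_induction with
      | mem s hs =>
        intro x₁ x₂
        have hσ := congrArg Prod.fst (congrFun h1 ⟨s, hs⟩)
        have hτ := congrArg Prod.snd (congrFun h1 ⟨s, hs⟩)
        constructor
        · intro h
          have e1 : e H₁ (s • x₁) = (e H₁ ∘ (fun x => s • x) ∘ r H₁) (e H₁ x₁) := by
            simp [Function.comp, hre H₁ x₁]
          have e2 : e H₂ (s • x₂) = (e H₂ ∘ (fun x => s • x) ∘ r H₂) (e H₂ x₂) := by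
            simp [Function.comp, hre H₂ x₂]
          rw [e1, e2, ← h]
          exact congrFun hσ (e H₁ x₁)
        · intro h
          have e1 : e H₁ x₁ = (e H₁ ∘ (fun x => s⁻¹ • x) ∘ r H₁) (e H₁ (s • x₁)) := by
            simp [Function.comp, hre H₁ (s • x₁), inv_smul_smul]
          have e2 : e H₂ x₂ = (e H₂ ∘ (fun x => s⁻¹ • x) ∘ r H₂) (e H₂ (s • x₂)) := by
            simp [Function.comp, hre H₂ (s • x₂), inv_smul_smul]
          rw [e1, e2, ← h]
          exact congrFun hτ (e H₁ (s • x₁))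
      | one => intro x₁ x₂; simp
      | mul a b _ _ ha hb =>
        intro x₁ x₂
        rw [hb x₁ x₂, ha (b • x₁) (b • x₂), ← mul_smul, ← mul_smul]
      | inv a _ ha =>
        intro x₁ x₂
        have := ha (a⁻¹ • x₁) (a⁻¹ • x₂)
        rw [smul_inv_smul, smul_inv_smul] at this
        exact this.symm
    -- membership in the two subgroups agrees on the dense subgroup
    have hsame : ∀ g ∈ D, (g ∈ (H₁ : Subgroup G) ↔ g ∈ (H₂ : Subgroup G)) := by
      intro g hg
      have h1 : (QuotientGroup.mk g : G ⧸ (H₁ : Subgroup G)) = g • QuotientGroup.mk 1 := by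
        rw [MulAction.Quotient.smul_mk, smul_eq_mul, mul_one]
      have h2 : (QuotientGroup.mk g : G ⧸ (H₂ : Subgroup G)) = g • QuotientGroup.mk 1 := by
        rw [MulAction.Quotient.smul_mk, smul_eq_mul, mul_one]
      have key := (main g hg (QuotientGroup.mk 1) (QuotientGroup.mk 1)).mp hb
      have mem1 : g ∈ (H₁ : Subgroup G) ↔
          (QuotientGroup.mk g : G ⧸ (H₁ : Subgroup G)) = QuotientGroup.mk 1 := by
        rw [QuotientGroup.eq]
        simp
      have mem2 : g ∈ (H₂ : Subgroup G) ↔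
          (QuotientGroup.mk g : G ⧸ (H₂ : Subgroup G)) = QuotientGroup.mk 1 := by
        rw [QuotientGroup.eq]
        simp
      rw [mem1, mem2, h1, h2]
      constructor
      · intro h
        apply he H₂
        rw [← key, h, hb]
      · intro h
        apply he H₁
        rw [key, h, hb]
    -- open subgroups are determined by their intersection with the dense subgroup
    have hclosure : ∀ H : T, ((H : Subgroup G) : Set G)
        = closure (((H : Subgroup G) : Set G) ∩ (D : Set G)) := by
      intro H
      apply le_antisymm
      · exact hS.open_subset_closure_inter H.2.1
      · calc closure (((H : Subgroup G) : Set G) ∩ (D : Set G))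
            ⊆ closure ((H : Subgroup G) : Set G) := closure_mono Set.inter_subset_left
          _ = ((H : Subgroup G) : Set G) :=
              (Subgroup.isClosed_of_isOpen _ H.2.1).closure_eq
    have hinter : ((H₁ : Subgroup G) : Set G) ∩ (D : Set G)
        = ((H₂ : Subgroup G) : Set G) ∩ (D : Set G) := by
      ext g
      constructor
      · rintro ⟨hg1, hg2⟩; exact ⟨(hsame g hg2).mp hg1, hg2⟩
      · rintro ⟨hg1, hg2⟩; exact ⟨(hsame g hg2).mpr hg1, hg2⟩
    have : ((H₁ : Subgroup G) : Set G) = ((H₂ : Subgroup G) : Set G) := by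
      rw [hclosure H₁, hclosure H₂, hinter]
    exact Subtype.ext (SetLike.coe_injective this)
  have : Finite T := Finite.of_injective Φ hΦ
  exact Set.toFinite T
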